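/- One-step L² contraction of the Euler scheme: let b : ℝ^d → ℝ^d and ρ : ℝ^d → (d×d matrices) be measurable, let δt > 0, let Y be a standard Gaussian random vector in ℝ^d, and for x ∈ ℝ^d set X₁(x) := x + b(x)δt + √(2δt) ρ(x) Y. Then for all x, y ∈ ℝ^d, E‖X₁(x) − X₁(y)‖² = ‖x−y‖² + 2δt ⟨x−y, b(x)−b(y)⟩ + 2δt ‖ρ(x) − ρ(y)‖²_HS + δt² ‖b(x)−b(y)‖². Consequently, if there exists α > 0 such that ‖ρ(x) − ρ(y)‖²_HS + ⟨x−y, b(x)−b(y)⟩ ≤ −α‖x−y‖² for all x,y, and b is L-Lipschitz, then E‖X₁(x) − X₁(y)‖² ≤ (1 − 2αδt + L²δt²) ‖x−y‖² for all x, y ∈ ℝ^d. -/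

import Mathlib

open MeasureTheory ProbabilityTheory

noncomputable section

/-- Squared Hilbert–Schmidt (Frobenius) norm `‖A‖²_HS = tr(AAᵀ) = ∑_{i,j} A_{ij}²`. -/
def hsNormSq {d : ℕ} (A : Matrix (Fin d) (Fin d) ℝ) : ℝ :=
  ∑ i : Fin d, ∑ j : Fin d, A i j ^ 2

/-- The standard Gaussian measure on `ℝ^d`: i.i.d. standard normal coordinates. -/
def stdGaussian (d : ℕ) : Measure (Fin d → ℝ) :=
  Measure.pi fun _ => gaussianReal 0 1

/-- One step of the Euler scheme: `X₁(x) = x + b(x)δt + √(2δt) ρ(x) Y`,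
as a function of the Gaussian input `y`. -/
def eulerStep {d : ℕ} (b : (Fin d → ℝ) → Fin d → ℝ)
    (ρ : (Fin d → ℝ) → Matrix (Fin d) (Fin d) ℝ) (δt : ℝ)
    (x : Fin d → ℝ) (y : Fin d → ℝ) : Fin d → ℝ :=
  fun i => x i + b x i * δt + Real.sqrt (2 * δt) * (ρ x).mulVec y i

namespace JOaux

open Real Filter Set
open scoped ENNReal NNReal

/-! ### One-dimensional Gaussian moments -/

lemma gauss_int_eq (g : ℝ → ℝ) :
    ∫ x, g x ∂gaussianReal 0 1 = ∫ x, gaussianPDFReal 0 1 x * g x := by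
  rw [gaussianReal_of_var_ne_zero 0 one_ne_zero]
  have h : (gaussianPDF 0 1) = fun x => ((gaussianPDFReal 0 1 x).toNNReal : ℝ≥0∞) := by
    ext x; simp [gaussianPDF, ENNReal.ofReal]
  rw [h, integral_withDensity_eq_integral_smul
    ((measurable_gaussianPDFReal 0 1).real_toNNReal) g]
  congr 1; ext x
  simp [NNReal.smul_def, Real.coe_toNNReal _ (gaussianPDFReal_nonneg 0 1 x)]

lemma gauss_pdf_eq (x : ℝ) :
    gaussianPDFReal 0 1 x = (Real.sqrt (2 * π))⁻¹ * rexp (-x ^ 2 / 2) := by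
  simp [gaussianPDFReal]

lemma gauss_integrable_iff (g : ℝ → ℝ) :
    Integrable g (gaussianReal 0 1) ↔
      Integrable (fun x => gaussianPDFReal 0 1 x * g x) := by
  rw [gaussianReal_of_var_ne_zero 0 one_ne_zero]
  have h : (gaussianPDF 0 1) = fun x => ((gaussianPDFReal 0 1 x).toNNReal : ℝ≥0∞) := by
    ext x; simp [gaussianPDF, ENNReal.ofReal]
  rw [h, integrable_withDensity_iff_integrable_smul
    ((measurable_gaussianPDFReal 0 1).real_toNNReal)]
  constructor <;> intro hi <;> refine hi.congr (Eventually.of_forall fun x => ?_) <;>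
    simp [NNReal.smul_def, Real.coe_toNNReal _ (gaussianPDFReal_nonneg 0 1 x)]

lemma integrable_id_gauss : Integrable (fun x : ℝ => x) (gaussianReal 0 1) := by
  rw [gauss_integrable_iff]
  have h := (integrable_mul_exp_neg_mul_sq (b := 1/2) (by norm_num)).const_mul
    (Real.sqrt (2 * π))⁻¹
  refine h.congr (Eventually.of_forall fun x => ?_)
  simp only [gauss_pdf_eq]; ring_nf

lemma integrable_sq_mul_exp : Integrable (fun x : ℝ => x ^ 2 * rexp (-x ^ 2 / 2)) := by
  have h := integrable_rpow_mul_exp_neg_mul_sq (b := 1/2) (by norm_num) (s := 2) (by norm_num)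
  convert h using 2 with x
  rw [Real.rpow_two]
  ring_nf

lemma integrable_exp_half : Integrable (fun x : ℝ => rexp (-x ^ 2 / 2)) := by
  have h := integrable_exp_neg_mul_sq (b := 1/2) (by norm_num)
  convert h using 2 with x
  ring_nf

lemma integrable_sq_gauss : Integrable (fun x : ℝ => x ^ 2) (gaussianReal 0 1) := by
  rw [gauss_integrable_iff]
  have h := integrable_sq_mul_exp.const_mul (Real.sqrt (2 * π))⁻¹
  refine h.congr (Eventually.of_forall fun x => ?_)
  simp only [gauss_pdf_eq]; ring

lemma integral_id_gauss : ∫ x, x ∂gaussianReal 0 1 = 0 := by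
  rw [gauss_int_eq]
  set f : ℝ → ℝ := fun x => gaussianPDFReal 0 1 x * x with hf
  have hodd : ∀ x, f (-x) = -f x := by
    intro x; simp only [hf, gauss_pdf_eq]; rw [neg_pow]; ring_nf
  have h1 : ∫ x, f x = ∫ x, f (-x) := (integral_neg_eq_self f volume).symm
  have h2 : ∫ x, f (-x) = -∫ x, f x := by
    simp_rw [hodd]; exact integral_neg f
  linarith [h1.trans h2]

lemma tendsto_phi_cocompact :
    Tendsto (fun x : ℝ => -x * rexp (-x ^ 2 / 2)) (Filter.cocompact ℝ) (nhds 0) := by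
  have h := tendsto_rpow_abs_mul_exp_neg_mul_sq_cocompact (a := 1/2) (by norm_num) 1
  refine squeeze_zero_norm (fun x => ?_) h
  rw [Real.norm_eq_abs, abs_mul, abs_neg, abs_of_pos (exp_pos _), Real.rpow_one]
  apply le_of_eq; ring_nf

lemma integral_sq_mul_exp : ∫ x : ℝ, x ^ 2 * rexp (-x ^ 2 / 2) = Real.sqrt (2 * Real.pi) := by
  set φ : ℝ → ℝ := fun x => -x * rexp (-x ^ 2 / 2) with hφ
  have hderiv : ∀ x : ℝ, HasDerivAt φ ((x ^ 2 - 1) * rexp (-x ^ 2 / 2)) x := by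
    intro x
    have h1 : HasDerivAt (fun x : ℝ => -x ^ 2 / 2) (-x) x := by
      have := ((hasDerivAt_pow 2 x).neg).div_const 2
      refine this.congr_deriv ?_; push_cast; ring
    have h3 : HasDerivAt (fun y : ℝ => -y) (-1) x := (hasDerivAt_id x).neg
    have := h3.mul (h1.exp)
    refine this.congr_deriv ?_
    ring
  have hint : Integrable (fun x : ℝ => (x ^ 2 - 1) * rexp (-x ^ 2 / 2)) := by
    have h := integrable_sq_mul_exp.sub integrable_exp_half
    refine h.congr (Filter.Eventually.of_forall fun x => ?_)
    simp only [Pi.sub_apply]; ring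
  have h0 : Tendsto φ (Filter.cocompact ℝ) (nhds 0) := tendsto_phi_cocompact
  have htop : Tendsto φ atTop (nhds 0) :=
    h0.mono_left (by rw [cocompact_eq_atBot_atTop]; exact le_sup_right)
  have hbot : Tendsto φ atBot (nhds 0) :=
    h0.mono_left (by rw [cocompact_eq_atBot_atTop]; exact le_sup_left)
  have hIoi : ∫ x in Ioi (0:ℝ), (x ^ 2 - 1) * rexp (-x ^ 2 / 2) = 0 - φ 0 :=
    integral_Ioi_of_hasDerivAt_of_tendsto' (fun x _ => hderiv x) hint.integrableOn htop
  have hIic : ∫ x in Iic (0:ℝ), (x ^ 2 - 1) * rexp (-x ^ 2 / 2) = φ 0 - 0 :=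
    integral_Iic_of_hasDerivAt_of_tendsto' (fun x _ => hderiv x) hint.integrableOn hbot
  have hall : ∫ x : ℝ, (x ^ 2 - 1) * rexp (-x ^ 2 / 2) = 0 := by
    rw [← intervalIntegral.integral_Iic_add_Ioi hint.integrableOn hint.integrableOn, hIoi, hIic]
    ring
  have hsub : ∫ x : ℝ, (x ^ 2 - 1) * rexp (-x ^ 2 / 2)
      = (∫ x : ℝ, x ^ 2 * rexp (-x ^ 2 / 2)) - ∫ x : ℝ, rexp (-x ^ 2 / 2) := by
    rw [← integral_sub integrable_sq_mul_exp integrable_exp_half]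
    congr 1 with x; ring
  have hg : ∫ x : ℝ, rexp (-x ^ 2 / 2) = Real.sqrt (2 * Real.pi) := by
    have h := integral_gaussian (1/2)
    rw [show Real.pi / (1/2) = 2 * Real.pi by ring] at h
    rw [← h]
    congr 1 with x; congr 1; ring
  rw [hsub, hg] at hall
  linarith

lemma integral_sq_gauss : ∫ x, x ^ 2 ∂gaussianReal 0 1 = 1 := by
  rw [gauss_int_eq]
  have h : ∫ x, gaussianPDFReal 0 1 x * x ^ 2
      = (Real.sqrt (2 * π))⁻¹ * ∫ x : ℝ, x ^ 2 * rexp (-x ^ 2 / 2) := by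
    rw [← integral_const_mul]
    congr 1 with x
    rw [gauss_pdf_eq]; ring
  rw [h, integral_sq_mul_exp, inv_mul_cancel₀]
  positivity

/-! ### Product (pi) Gaussian moments -/

lemma pi_integral (d : ℕ) (g : Fin d → ℝ → ℝ) :
    ∫ w, ∏ i, g i (w i) ∂stdGaussian d = ∏ i, ∫ x, g i x ∂gaussianReal 0 1 := by
  letI : MeasureSpace ℝ := ⟨gaussianReal 0 1⟩
  haveI : SigmaFinite (volume : Measure ℝ) := (inferInstance : SigmaFinite (gaussianReal 0 1))
  have h : stdGaussian d = (volume : Measure (Fin d → ℝ)) := rfl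
  rw [h]
  exact MeasureTheory.integral_fintype_prod_eq_prod g

lemma pi_integrable (d : ℕ) (g : Fin d → ℝ → ℝ)
    (hg : ∀ i, Integrable (g i) (gaussianReal 0 1)) :
    Integrable (fun w => ∏ i, g i (w i)) (stdGaussian d) := by
  letI : MeasureSpace ℝ := ⟨gaussianReal 0 1⟩
  haveI : SigmaFinite (volume : Measure ℝ) := (inferInstance : SigmaFinite (gaussianReal 0 1))
  have h : stdGaussian d = (volume : Measure (Fin d → ℝ)) := rfl
  rw [h]
  exact MeasureTheory.Integrable.fintype_prod hg

instance (d : ℕ) : IsProbabilityMeasure (stdGaussian d) := by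
  unfold _root_.stdGaussian; infer_instance

/-- coordinate functions for single moment -/
lemma coord_eq (d : ℕ) (j : Fin d) (w : Fin d → ℝ) :
    (∏ i, (if i = j then (fun x : ℝ => x) else fun _ => (1:ℝ)) (w i)) = w j := by
  rw [Finset.prod_eq_single j (fun i _ hij => by simp [hij]) (by simp)]
  simp

lemma integrable_coord (d : ℕ) (j : Fin d) :
    Integrable (fun w : Fin d → ℝ => w j) (stdGaussian d) := by
  have h := pi_integrable d (fun i => if i = j then (fun x : ℝ => x) else fun _ => (1:ℝ))
    (fun i => by by_cases hij : i = j <;> simp [hij, integrable_id_gauss])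
  refine h.congr (Eventually.of_forall fun w => coord_eq d j w)

lemma integral_coord (d : ℕ) (j : Fin d) :
    ∫ w, w j ∂stdGaussian d = 0 := by
  rw [show (fun w : Fin d → ℝ => w j)
      = fun w => ∏ i, (if i = j then (fun x : ℝ => x) else fun _ => (1:ℝ)) (w i) from
    funext fun w => (coord_eq d j w).symm]
  rw [pi_integral]
  exact Finset.prod_eq_zero (Finset.mem_univ j) (by simp [integral_id_gauss])

lemma coord_mul_eq (d : ℕ) (j k : Fin d) (hjk : j ≠ k) (w : Fin d → ℝ) :
    (∏ i, (if i = j then (fun x : ℝ => x) else if i = k then (fun x : ℝ => x)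
      else fun _ => (1:ℝ)) (w i)) = w j * w k := by
  rw [← Finset.prod_subset (Finset.subset_univ ({j, k} : Finset (Fin d)))
    (fun i _ hi => by
      simp only [Finset.mem_insert, Finset.mem_singleton, not_or] at hi
      simp [hi.1, hi.2])]
  rw [Finset.prod_insert (by simp [hjk]), Finset.prod_singleton]
  simp [hjk, Ne.symm hjk]

lemma integrable_coord_mul (d : ℕ) (j k : Fin d) :
    Integrable (fun w : Fin d → ℝ => w j * w k) (stdGaussian d) := by
  rcases eq_or_ne j k with rfl | hjk
  · have h := pi_integrable d (fun i => if i = j then (fun x : ℝ => x ^ 2) else fun _ => (1:ℝ))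
      (fun i => by by_cases hij : i = j <;> simp [hij, integrable_sq_gauss])
    refine h.congr (Eventually.of_forall fun w => ?_)
    beta_reduce
    rw [Finset.prod_eq_single j (fun i _ hij => by simp [hij]) (by simp)]
    simp [sq]
  · have h := pi_integrable d (fun i => if i = j then (fun x : ℝ => x)
        else if i = k then (fun x : ℝ => x) else fun _ => (1:ℝ))
      (fun i => by by_cases hij : i = j
                   · simp [hij, integrable_id_gauss]
                   by_cases hik : i = k <;> simp [hij, hik, integrable_id_gauss])
    refine h.congr (Eventually.of_forall fun w => coord_mul_eq d j k hjk w)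

lemma integral_coord_mul (d : ℕ) (j k : Fin d) :
    ∫ w, w j * w k ∂stdGaussian d = if j = k then 1 else 0 := by
  rcases eq_or_ne j k with rfl | hjk
  · simp only [if_pos rfl]
    rw [show (fun w : Fin d → ℝ => w j * w j)
        = fun w => ∏ i, (if i = j then (fun x : ℝ => x ^ 2) else fun _ => (1:ℝ)) (w i) from
      funext fun w => by
        rw [Finset.prod_eq_single j (fun i _ hij => by simp [hij]) (by simp)]; simp [sq]]
    rw [pi_integral]
    refine Finset.prod_eq_one fun i _ => ?_
    split <;> simp [integral_sq_gauss]
  · rw [if_neg hjk]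
    rw [show (fun w : Fin d → ℝ => w j * w k)
        = fun w => ∏ i, (if i = j then (fun x : ℝ => x)
            else if i = k then (fun x : ℝ => x) else fun _ => (1:ℝ)) (w i) from
      funext fun w => (coord_mul_eq d j k hjk w).symm]
    rw [pi_integral]
    exact Finset.prod_eq_zero (Finset.mem_univ j) (by simp [integral_id_gauss])

end JOaux

open JOaux
/-- **One-step L² contraction of the Euler scheme** (proof of Corollary 2 in
Joulin–Ollivier): for a standard Gaussian input,
`E‖X₁(x) − X₁(y)‖² = ‖x−y‖² + 2δt⟨x−y, b(x)−b(y)⟩ + 2δt‖ρ(x)−ρ(y)‖²_HS +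
δt²‖b(x)−b(y)‖²`; consequently under the stability condition (C) with constant `α > 0`
and `b` `L`-Lipschitz, `E‖X₁(x) − X₁(y)‖² ≤ (1 − 2αδt + L²δt²)‖x−y‖²`. -/
theorem euler_scheme_one_step_contraction {d : ℕ}
    (b : (Fin d → ℝ) → Fin d → ℝ) (hb : Measurable b)
    (ρ : (Fin d → ℝ) → Matrix (Fin d) (Fin d) ℝ) (hρ : ∀ i j : Fin d, Measurable fun x => ρ x i j)
    (δt : ℝ) (hδt : 0 < δt) :
    (∀ x y : Fin d → ℝ,
      (∫ w, ∑ i : Fin d, (eulerStep b ρ δt x w i - eulerStep b ρ δt y w i) ^ 2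
          ∂(stdGaussian d))
        = (∑ i : Fin d, (x i - y i) ^ 2)
          + 2 * δt * (∑ i : Fin d, (x i - y i) * (b x i - b y i))
          + 2 * δt * hsNormSq (ρ x - ρ y)
          + δt ^ 2 * ∑ i : Fin d, (b x i - b y i) ^ 2) ∧
    (∀ α L : ℝ, 0 < α →
      (∀ x y : Fin d → ℝ,
        hsNormSq (ρ x - ρ y) + (∑ i : Fin d, (x i - y i) * (b x i - b y i))
          ≤ -α * ∑ i : Fin d, (x i - y i) ^ 2) →
      (∀ x y : Fin d → ℝ,
        Real.sqrt (∑ i : Fin d, (b x i - b y i) ^ 2)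
          ≤ L * Real.sqrt (∑ i : Fin d, (x i - y i) ^ 2)) →
      ∀ x y : Fin d → ℝ,
        (∫ w, ∑ i : Fin d, (eulerStep b ρ δt x w i - eulerStep b ρ δt y w i) ^ 2
            ∂(stdGaussian d))
          ≤ (1 - 2 * α * δt + L ^ 2 * δt ^ 2) * ∑ i : Fin d, (x i - y i) ^ 2) := by
  have key : ∀ x y : Fin d → ℝ,
      (∫ w, ∑ i : Fin d, (eulerStep b ρ δt x w i - eulerStep b ρ δt y w i) ^ 2
          ∂(stdGaussian d))
        = (∑ i : Fin d, (x i - y i) ^ 2)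
          + 2 * δt * (∑ i : Fin d, (x i - y i) * (b x i - b y i))
          + 2 * δt * hsNormSq (ρ x - ρ y)
          + δt ^ 2 * ∑ i : Fin d, (b x i - b y i) ^ 2 := by
    intro x y
    set c : Fin d → ℝ := fun i => (x i - y i) + (b x i - b y i) * δt with hc
    set M : Matrix (Fin d) (Fin d) ℝ := ρ x - ρ y with hM
    set s : ℝ := Real.sqrt (2 * δt) with hs
    have hs2 : s ^ 2 = 2 * δt := Real.sq_sqrt (by linarith)
    have hdiff : ∀ (w : Fin d → ℝ) (i : Fin d),
        eulerStep b ρ δt x w i - eulerStep b ρ δt y w i = c i + s * ∑ j, M i j * w j := by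
      intro w i
      have h2 : (ρ x).mulVec w i - (ρ y).mulVec w i = ∑ j, M i j * w j := by
        simp [Matrix.mulVec, dotProduct, hM, Matrix.sub_apply, sub_mul,
          Finset.sum_sub_distrib]
      simp only [eulerStep, hc]
      linear_combination s * h2
    -- integrability of linear and quadratic pieces
    have hTint : ∀ i : Fin d, Integrable (fun w : Fin d → ℝ => ∑ j, M i j * w j)
        (stdGaussian d) :=
      fun i => integrable_finset_sum _ fun j _ => (integrable_coord d j).const_mul _
    have hT2eq : ∀ i : Fin d, (fun w : Fin d → ℝ => (∑ j, M i j * w j) ^ 2)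
        = fun w => ∑ j, ∑ k, (M i j * M i k) * (w j * w k) := by
      intro i
      funext w
      rw [sq, Finset.sum_mul_sum]
      refine Finset.sum_congr rfl fun j _ => Finset.sum_congr rfl fun k _ => by ring
    have hT2int : ∀ i : Fin d, Integrable (fun w : Fin d → ℝ => (∑ j, M i j * w j) ^ 2)
        (stdGaussian d) := by
      intro i
      rw [hT2eq i]
      exact integrable_finset_sum _ fun j _ => integrable_finset_sum _
        fun k _ => (integrable_coord_mul d j k).const_mul _
    have hIT : ∀ i : Fin d, ∫ w, (∑ j, M i j * w j) ∂stdGaussian d = 0 := by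
      intro i
      rw [integral_finset_sum _ fun j _ => (integrable_coord d j).const_mul _]
      simp [integral_const_mul, integral_coord]
    have hIT2 : ∀ i : Fin d, ∫ w, (∑ j, M i j * w j) ^ 2 ∂stdGaussian d
        = ∑ j, M i j ^ 2 := by
      intro i
      rw [hT2eq i]
      rw [integral_finset_sum _ fun j _ => integrable_finset_sum _
        fun k _ => (integrable_coord_mul d j k).const_mul _]
      have : ∀ j : Fin d, ∫ w, (∑ k, (M i j * M i k) * (w j * w k)) ∂stdGaussian d
          = M i j ^ 2 := by
        intro j
        rw [integral_finset_sum _ fun k _ => (integrable_coord_mul d j k).const_mul _]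
        simp only [integral_const_mul, integral_coord_mul]
        simp [Finset.sum_ite_eq, sq]
      rw [Finset.sum_congr rfl fun j _ => this j]
    have hper : ∀ i : Fin d,
        ∫ w, (c i + s * ∑ j, M i j * w j) ^ 2 ∂stdGaussian d
          = c i ^ 2 + s ^ 2 * ∑ j, M i j ^ 2 := by
      intro i
      have hrw : (fun w : Fin d → ℝ => (c i + s * ∑ j, M i j * w j) ^ 2)
          = fun w => c i ^ 2 + ((2 * s * c i) * (∑ j, M i j * w j)
              + s ^ 2 * (∑ j, M i j * w j) ^ 2) := by
        funext w; ring
      have i2 : Integrable (fun w : Fin d → ℝ =>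
          (2 * s * c i) * (∑ j, M i j * w j)) (stdGaussian d) := (hTint i).const_mul _
      have i3 : Integrable (fun w : Fin d → ℝ =>
          s ^ 2 * (∑ j, M i j * w j) ^ 2) (stdGaussian d) := (hT2int i).const_mul _
      have e1 := integral_add (μ := stdGaussian d)
        (f := fun _ : Fin d → ℝ => c i ^ 2)
        (g := fun w : Fin d → ℝ => (2 * s * c i) * (∑ j, M i j * w j)
          + s ^ 2 * (∑ j, M i j * w j) ^ 2)
        (integrable_const _) (i2.add i3)
      have e2 := integral_add (μ := stdGaussian d)
        (f := fun w : Fin d → ℝ => (2 * s * c i) * (∑ j, M i j * w j))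
        (g := fun w : Fin d → ℝ => s ^ 2 * (∑ j, M i j * w j) ^ 2) i2 i3
      rw [hrw, e1, e2, integral_const_mul, integral_const_mul, hIT i, hIT2 i, integral_const]
      simp
    have hperint : ∀ i : Fin d,
        Integrable (fun w : Fin d → ℝ => (c i + s * ∑ j, M i j * w j) ^ 2)
          (stdGaussian d) := by
      intro i
      have hrw : (fun w : Fin d → ℝ => (c i + s * ∑ j, M i j * w j) ^ 2)
          = fun w => c i ^ 2 + ((2 * s * c i) * (∑ j, M i j * w j)
              + s ^ 2 * (∑ j, M i j * w j) ^ 2) := by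
        funext w; ring
      rw [hrw]
      exact (integrable_const _).add (((hTint i).const_mul _).add ((hT2int i).const_mul _))
    have hmain : (∫ w, ∑ i : Fin d, (eulerStep b ρ δt x w i - eulerStep b ρ δt y w i) ^ 2
          ∂(stdGaussian d))
        = ∑ i, (c i ^ 2 + s ^ 2 * ∑ j, M i j ^ 2) := by
      have h1 : (fun w : Fin d → ℝ =>
          ∑ i : Fin d, (eulerStep b ρ δt x w i - eulerStep b ρ δt y w i) ^ 2)
          = fun w => ∑ i, (c i + s * ∑ j, M i j * w j) ^ 2 := by
        funext w
        exact Finset.sum_congr rfl fun i _ => by rw [hdiff w i]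
      rw [h1, integral_finset_sum _ fun i _ => hperint i]
      exact Finset.sum_congr rfl fun i _ => hper i
    rw [hmain]
    rw [Finset.sum_add_distrib, ← Finset.mul_sum]
    have hcsq : ∑ i, c i ^ 2
        = (∑ i : Fin d, (x i - y i) ^ 2)
          + 2 * δt * (∑ i : Fin d, (x i - y i) * (b x i - b y i))
          + δt ^ 2 * ∑ i : Fin d, (b x i - b y i) ^ 2 := by
      have : ∀ i : Fin d, c i ^ 2 = (x i - y i) ^ 2
          + 2 * δt * ((x i - y i) * (b x i - b y i)) + δt ^ 2 * (b x i - b y i) ^ 2 := by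
        intro i; simp only [hc]; ring
      rw [Finset.sum_congr rfl fun i _ => this i]
      rw [Finset.sum_add_distrib, Finset.sum_add_distrib, ← Finset.mul_sum, ← Finset.mul_sum]
    have hhs : s ^ 2 * (∑ i, ∑ j, M i j ^ 2) = 2 * δt * hsNormSq (ρ x - ρ y) := by
      rw [hs2, hsNormSq, hM]
    rw [hcsq, hhs]
    ring
  refine ⟨key, ?_⟩
  intro α L hα hC hL x y
  rw [key x y]
  set A := ∑ i : Fin d, (x i - y i) ^ 2 with hA
  set B := ∑ i : Fin d, (x i - y i) * (b x i - b y i) with hB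
  set H := hsNormSq (ρ x - ρ y) with hH
  set D := ∑ i : Fin d, (b x i - b y i) ^ 2 with hD
  have hAnn : 0 ≤ A := Finset.sum_nonneg fun i _ => sq_nonneg _
  have hDnn : 0 ≤ D := Finset.sum_nonneg fun i _ => sq_nonneg _
  have hHB : H + B ≤ -α * A := hC x y
  have hDA : D ≤ L ^ 2 * A := by
    have h := hL x y
    have h1 : Real.sqrt D ^ 2 ≤ (L * Real.sqrt A) ^ 2 := by
      have h0 : (0:ℝ) ≤ L * Real.sqrt A := le_trans (Real.sqrt_nonneg D) h
      nlinarith [Real.sqrt_nonneg D]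
    rwa [Real.sq_sqrt hDnn, mul_pow, Real.sq_sqrt hAnn] at h1
  nlinarith [sq_nonneg δt, mul_le_mul_of_nonneg_left hHB (by linarith : (0:ℝ) ≤ 2 * δt),
    mul_le_mul_of_nonneg_left hDA (sq_nonneg δt)]

end
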